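/- Let H be a 2×2 complex Hermitian matrix and let ρ : ℝ → M₂(ℂ) be a curve satisfying the von Neumann equation, i.e., for every t each entry of ρ is differentiable with derivative matrix ρ'(t) = −i(Hρ(t) − ρ(t)H). Then for every θ ∈ (0,π) and φ ∈ ℝ, the function t ↦ Q_{ρ(t)}(θ,φ) is differentiable with derivative (4π/sinθ)·( ∂Q_H/∂θ · ∂Q_{ρ(t)}/∂φ − ∂Q_H/∂φ · ∂Q_{ρ(t)}/∂θ ); that is, unitary evolution of the state is a sine-bracket (Poisson) flow of its Q function on the sphere. -/

import Mathlib

open Matrix Complex Real MeasureTheory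

noncomputable section

/-- The spin coherent state |θ,φ⟩ = cos(θ/2)|0⟩ + e^{iφ} sin(θ/2)|1⟩. -/
def cohVec (θ φ : ℝ) : Fin 2 → ℂ :=
  ![((Real.cos (θ / 2) : ℝ) : ℂ),
    Complex.exp (Complex.I * (φ : ℂ)) * ((Real.sin (θ / 2) : ℝ) : ℂ)]

/-- The Husimi Q function of a 2×2 complex matrix. -/
def Qfun (A : Matrix (Fin 2) (Fin 2) ℂ) (θ φ : ℝ) : ℂ :=
  (1 / (2 * Real.pi) : ℂ) *
    ∑ k, ∑ l, (starRingEnd ℂ) (cohVec θ φ k) * A k l * cohVec θ φ l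

/-- ∂Q_A/∂θ. -/
def Qθ (A : Matrix (Fin 2) (Fin 2) ℂ) (θ φ : ℝ) : ℂ :=
  deriv (fun t => Qfun A t φ) θ

/-- ∂Q_A/∂φ. -/
def Qφ (A : Matrix (Fin 2) (Fin 2) ℂ) (θ φ : ℝ) : ℂ :=
  deriv (fun p => Qfun A θ p) φ

lemma qfun_expand (A : Matrix (Fin 2) (Fin 2) ℂ) (θ φ : ℝ) :
    Qfun A θ φ = (1 / (2 * Real.pi) : ℂ) *
      (((Real.cos (θ/2) : ℝ) : ℂ) * A 0 0 * ((Real.cos (θ/2) : ℝ) : ℂ)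
        + ((Real.cos (θ/2) : ℝ) : ℂ) * A 0 1 * (Complex.exp (Complex.I * φ) * ((Real.sin (θ/2) : ℝ) : ℂ))
        + (Complex.exp (-(Complex.I * φ)) * ((Real.sin (θ/2) : ℝ) : ℂ) * A 1 0 * ((Real.cos (θ/2) : ℝ) : ℂ)
        + Complex.exp (-(Complex.I * φ)) * ((Real.sin (θ/2) : ℝ) : ℂ) * A 1 1 * (Complex.exp (Complex.I * φ) * ((Real.sin (θ/2) : ℝ) : ℂ)))) := by
  simp [Qfun, cohVec, Fin.sum_univ_two, _root_.map_mul, Complex.conj_ofReal, ← Complex.exp_conj,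
    ← Complex.cos_conj, ← Complex.sin_conj, map_div₀, map_ofNat, neg_mul,
    mul_comm, mul_assoc, mul_left_comm, add_assoc]

lemma hasDerivAt_cosC (θ : ℝ) :
    HasDerivAt (fun t : ℝ => ((Real.cos (t / 2) : ℝ) : ℂ))
      ((-Real.sin (θ / 2) * (1 / 2) : ℝ) : ℂ) θ :=
  by have h := (Real.hasDerivAt_cos (θ / 2)).comp θ ((hasDerivAt_id θ).div_const 2); exact h.ofReal_comp

lemma hasDerivAt_sinC (θ : ℝ) :
    HasDerivAt (fun t : ℝ => ((Real.sin (t / 2) : ℝ) : ℂ))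
      ((Real.cos (θ / 2) * (1 / 2) : ℝ) : ℂ) θ :=
  by have h := (Real.hasDerivAt_sin (θ / 2)).comp θ ((hasDerivAt_id θ).div_const 2); exact h.ofReal_comp

lemma hasDerivAt_Qfun_theta (A : Matrix (Fin 2) (Fin 2) ℂ) (θ φ : ℝ) :
    HasDerivAt (fun t => Qfun A t φ)
      ((1 / (2 * Real.pi) : ℂ) *
        (-(((Real.cos (θ/2) : ℝ) : ℂ) * ((Real.sin (θ/2) : ℝ) : ℂ)) * A 0 0
          + ((((Real.cos (θ/2) : ℝ) : ℂ)^2 - ((Real.sin (θ/2) : ℝ) : ℂ)^2)/2) *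
              (Complex.exp (Complex.I * φ) * A 0 1 + Complex.exp (-(Complex.I * φ)) * A 1 0)
          + ((Real.cos (θ/2) : ℝ) : ℂ) * ((Real.sin (θ/2) : ℝ) : ℂ) * A 1 1)) θ := by
  have hfun : (fun t => Qfun A t φ) = fun t => (1 / (2 * Real.pi) : ℂ) *
      (((Real.cos (t/2) : ℝ) : ℂ) * A 0 0 * ((Real.cos (t/2) : ℝ) : ℂ)
        + ((Real.cos (t/2) : ℝ) : ℂ) * A 0 1 * (Complex.exp (Complex.I * φ) * ((Real.sin (t/2) : ℝ) : ℂ))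
        + (Complex.exp (-(Complex.I * φ)) * ((Real.sin (t/2) : ℝ) : ℂ) * A 1 0 * ((Real.cos (t/2) : ℝ) : ℂ)
        + Complex.exp (-(Complex.I * φ)) * ((Real.sin (t/2) : ℝ) : ℂ) * A 1 1 * (Complex.exp (Complex.I * φ) * ((Real.sin (t/2) : ℝ) : ℂ)))) :=
    funext fun t => qfun_expand A t φ
  rw [hfun]
  have hC := hasDerivAt_cosC θ
  have hS := hasDerivAt_sinC θ
  have hEF : Complex.exp (Complex.I * φ) * Complex.exp (-(Complex.I * φ)) = 1 := by
    rw [← Complex.exp_add]; simp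
  have h := ((((hC.mul_const (A 0 0)).mul hC).add
      ((hC.mul_const (A 0 1)).mul (hS.const_mul (Complex.exp (Complex.I * φ))))).add
      (((((hS.const_mul (Complex.exp (-(Complex.I * φ)))).mul_const (A 1 0)).mul hC)).add
      ((((hS.const_mul (Complex.exp (-(Complex.I * φ)))).mul_const (A 1 1)).mul
        (hS.const_mul (Complex.exp (Complex.I * φ))))))).const_mul
      ((1 / (2 * Real.pi) : ℂ))
  refine h.congr_deriv (Eq.symm ?_)
  push_cast
  linear_combination (-(1 / (2 * (Real.pi : ℂ))) * Complex.cos ((θ:ℂ)/2) *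
    Complex.sin ((θ:ℂ)/2) * A 1 1) * hEF

lemma hasDerivAt_Qfun_phi (A : Matrix (Fin 2) (Fin 2) ℂ) (θ φ : ℝ) :
    HasDerivAt (fun p => Qfun A θ p)
      ((1 / (2 * Real.pi) : ℂ) *
        (Complex.I * Complex.exp (Complex.I * φ) * ((Real.cos (θ/2) : ℝ) : ℂ) * ((Real.sin (θ/2) : ℝ) : ℂ) * A 0 1
          - Complex.I * Complex.exp (-(Complex.I * φ)) * ((Real.cos (θ/2) : ℝ) : ℂ) * ((Real.sin (θ/2) : ℝ) : ℂ) * A 1 0)) φ := by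
  have hfun : (fun p => Qfun A θ p) = fun p : ℝ => (1 / (2 * Real.pi) : ℂ) *
      (((Real.cos (θ/2) : ℝ) : ℂ) * A 0 0 * ((Real.cos (θ/2) : ℝ) : ℂ)
        + ((Real.cos (θ/2) : ℝ) : ℂ) * A 0 1 * (Complex.exp (Complex.I * p) * ((Real.sin (θ/2) : ℝ) : ℂ))
        + (Complex.exp (-(Complex.I * p)) * ((Real.sin (θ/2) : ℝ) : ℂ) * A 1 0 * ((Real.cos (θ/2) : ℝ) : ℂ)
        + Complex.exp (-(Complex.I * p)) * ((Real.sin (θ/2) : ℝ) : ℂ) * A 1 1 * (Complex.exp (Complex.I * p) * ((Real.sin (θ/2) : ℝ) : ℂ)))) :=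
    funext fun p => qfun_expand A θ p
  rw [hfun]
  have hzE : HasDerivAt (fun z : ℂ => Complex.exp (Complex.I * z))
      (Complex.exp (Complex.I * φ) * (Complex.I * 1)) (φ : ℂ) :=
    (Complex.hasDerivAt_exp _).comp _ ((hasDerivAt_id _).const_mul Complex.I)
  have hzF : HasDerivAt (fun z : ℂ => Complex.exp (-(Complex.I * z)))
      (Complex.exp (-(Complex.I * φ)) * (-(Complex.I * 1))) (φ : ℂ) :=
    (Complex.hasDerivAt_exp _).comp _ (((hasDerivAt_id _).const_mul Complex.I).neg)
  have hE := hzE.comp_ofReal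
  have hF := hzF.comp_ofReal
  have h := (((hasDerivAt_const φ (((Real.cos (θ/2) : ℝ) : ℂ) * A 0 0 * ((Real.cos (θ/2) : ℝ) : ℂ))).add
      (((hE.mul_const (((Real.sin (θ/2) : ℝ) : ℂ))).const_mul (((Real.cos (θ/2) : ℝ) : ℂ) * A 0 1)))).add
      ((((hF.mul_const (((Real.sin (θ/2) : ℝ) : ℂ))).mul_const (A 1 0)).mul_const (((Real.cos (θ/2) : ℝ) : ℂ))).add
      (((hF.mul_const (((Real.sin (θ/2) : ℝ) : ℂ))).mul_const (A 1 1)).mul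
        (hE.mul_const (((Real.sin (θ/2) : ℝ) : ℂ)))))).const_mul ((1 / (2 * Real.pi) : ℂ))
  refine h.congr_deriv (Eq.symm ?_)
  ring

/-- unitary (von Neumann) evolution of the state is a sine-bracket
(Poisson) flow of its Q function on the sphere. -/
theorem unitary_evolution_is_sine_bracket_flow
    (H : Matrix (Fin 2) (Fin 2) ℂ) (hH : H.IsHermitian)
    (ρ : ℝ → Matrix (Fin 2) (Fin 2) ℂ)
    (hρ : ∀ t, ∀ i j, HasDerivAt (fun t' => ρ t' i j)
      (((-Complex.I) • (H * ρ t - ρ t * H)) i j) t) :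
    ∀ θ ∈ Set.Ioo (0 : ℝ) Real.pi, ∀ φ : ℝ, ∀ t : ℝ,
      HasDerivAt (fun t' => Qfun (ρ t') θ φ)
        (((4 * Real.pi / Real.sin θ : ℝ) : ℂ) *
          (Qθ H θ φ * Qφ (ρ t) θ φ - Qφ H θ φ * Qθ (ρ t) θ φ)) t := by
  intro θ hθ φ t
  have key : HasDerivAt (fun t' => Qfun (ρ t') θ φ)
      (Qfun ((-Complex.I) • (H * ρ t - ρ t * H)) θ φ) t := by
    simp only [Qfun, Fin.sum_univ_two]
    exact (((((hρ t 0 0).const_mul _).mul_const _).add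
      (((hρ t 0 1).const_mul _).mul_const _)).add
      ((((hρ t 1 0).const_mul _).mul_const _).add
      (((hρ t 1 1).const_mul _).mul_const _))).const_mul _
  convert key using 1
  rw [Qθ, Qφ, Qθ, Qφ, (hasDerivAt_Qfun_theta H θ φ).deriv, (hasDerivAt_Qfun_phi H θ φ).deriv,
      (hasDerivAt_Qfun_theta (ρ t) θ φ).deriv, (hasDerivAt_Qfun_phi (ρ t) θ φ).deriv,
      qfun_expand]
  simp only [Matrix.smul_apply, Matrix.sub_apply, Matrix.mul_apply, Fin.sum_univ_two,
    smul_eq_mul]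
  have h1 : Real.sin θ = 2 * Real.sin (θ/2) * Real.cos (θ/2) := by
    have h2 := Real.sin_two_mul (θ/2)
    rwa [show 2*(θ/2) = θ by ring] at h2
  have hs : Real.sin (θ/2) ≠ 0 :=
    ne_of_gt (Real.sin_pos_of_pos_of_lt_pi (by linarith [hθ.1])
      (by linarith [hθ.2, Real.pi_pos]))
  have hc : Real.cos (θ/2) ≠ 0 :=
    ne_of_gt (Real.cos_pos_of_mem_Ioo ⟨by linarith [hθ.1, Real.pi_pos], by linarith [hθ.2]⟩)
  have hπ : (Real.pi : ℂ) ≠ 0 := by exact_mod_cast Real.pi_ne_zero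
  have hsC : ((Real.sin (θ/2) : ℝ) : ℂ) ≠ 0 := by exact_mod_cast hs
  have hcC : ((Real.cos (θ/2) : ℝ) : ℂ) ≠ 0 := by exact_mod_cast hc
  have hEF : Complex.exp (Complex.I * φ) * Complex.exp (-(Complex.I * φ)) = 1 := by
    rw [← Complex.exp_add]; simp
  rw [h1]
  simp only [Complex.ofReal_div, Complex.ofReal_mul, Complex.ofReal_ofNat]
  set C : ℂ := ((Real.cos (θ/2) : ℝ) : ℂ) with hCdef
  set S : ℂ := ((Real.sin (θ/2) : ℝ) : ℂ) with hSdef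
  set E : ℂ := Complex.exp (Complex.I * φ) with hEdef
  set F : ℂ := Complex.exp (-(Complex.I * φ)) with hFdef
  have main :
      (-(C * S) * H 0 0 + ((C^2 - S^2)/2) * (E * H 0 1 + F * H 1 0) + C * S * H 1 1) *
        (Complex.I * E * C * S * ρ t 0 1 - Complex.I * F * C * S * ρ t 1 0)
      - (Complex.I * E * C * S * H 0 1 - Complex.I * F * C * S * H 1 0) *
        (-(C * S) * ρ t 0 0 + ((C^2 - S^2)/2) * (E * ρ t 0 1 + F * ρ t 1 0) + C * S * ρ t 1 1)
      = S * C *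
        (C * (-Complex.I * ((H 0 0 * ρ t 0 0 + H 0 1 * ρ t 1 0) - (ρ t 0 0 * H 0 0 + ρ t 0 1 * H 1 0))) * C
          + C * (-Complex.I * ((H 0 0 * ρ t 0 1 + H 0 1 * ρ t 1 1) - (ρ t 0 0 * H 0 1 + ρ t 0 1 * H 1 1))) * (E * S)
          + F * S * (-Complex.I * ((H 1 0 * ρ t 0 0 + H 1 1 * ρ t 1 0) - (ρ t 1 0 * H 0 0 + ρ t 1 1 * H 1 0))) * C
          + F * S * (-Complex.I * ((H 1 0 * ρ t 0 1 + H 1 1 * ρ t 1 1) - (ρ t 1 0 * H 0 1 + ρ t 1 1 * H 1 1))) * (E * S)) := by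
    linear_combination (Complex.I * C^3 * S * (H 1 0 * ρ t 0 1 - H 0 1 * ρ t 1 0)) * hEF
  trans ((1 / (2 * (Real.pi : ℂ) * S * C)) *
      ((-(C * S) * H 0 0 + ((C^2 - S^2)/2) * (E * H 0 1 + F * H 1 0) + C * S * H 1 1) *
        (Complex.I * E * C * S * ρ t 0 1 - Complex.I * F * C * S * ρ t 1 0)
      - (Complex.I * E * C * S * H 0 1 - Complex.I * F * C * S * H 1 0) *
        (-(C * S) * ρ t 0 0 + ((C^2 - S^2)/2) * (E * ρ t 0 1 + F * ρ t 1 0) + C * S * ρ t 1 1)))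
  · field_simp [hπ, hsC, hcC]
    ring
  rw [main, one_div_mul_eq_div, one_div_mul_eq_div,
    div_eq_div_iff (by simp [hπ, hsC, hcC]) (by simp [hπ])]
  ring
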